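/- For any prime ℓ and positive integer s, every abelian subgroup H of GL_2(ℤ/ℓ^s ℤ) has order at most ℓ^{3s}. -/

import Mathlib

lemma card_le_of_subset_range {β : Type*} [Finite β] {n : ℕ} (f : Fin n → β) {S : Set β}
    (h : S ⊆ Set.range f) : Nat.card S ≤ n := by
  calc Nat.card S ≤ Nat.card (Set.range f) := Nat.card_mono (Set.toFinite _) h
    _ ≤ Nat.card (Fin n) := Nat.card_le_card_of_surjective _ Set.rangeFactorization_surjective
    _ = n := by simp

lemma card_ann (ℓ s k : ℕ) (hℓ : ℓ.Prime) (hk : k ≤ s) [NeZero (ℓ^s)] :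
    Nat.card {x : ZMod (ℓ^s) | (ℓ:ZMod (ℓ^s))^k * x = 0} ≤ ℓ^k := by
  apply card_le_of_subset_range (fun m : Fin (ℓ^k) => ((ℓ^(s-k) * (m:ℕ) : ℕ) : ZMod (ℓ^s)))
  rintro x hx
  have hx' : (ℓ:ZMod (ℓ^s))^k * x = 0 := hx
  have h1 : ((ℓ^k * x.val : ℕ) : ZMod (ℓ^s)) = 0 := by
    push_cast [ZMod.natCast_zmod_val]
    exact hx'
  have h2 : ℓ^s ∣ ℓ^k * x.val := (ZMod.natCast_eq_zero_iff _ _).mp h1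
  have hq : ℓ^s = ℓ^k * ℓ^(s-k) := by rw [← pow_add]; congr 1; omega
  have h3 : ℓ^(s-k) ∣ x.val := by
    have h2' : ℓ^k * ℓ^(s-k) ∣ ℓ^k * x.val := by rw [← hq]; exact h2
    exact (mul_dvd_mul_iff_left (pow_ne_zero k hℓ.pos.ne')).mp h2'
  obtain ⟨m, hm⟩ := h3
  have hmlt : m < ℓ^k := by
    have hxlt : x.val < ℓ^s := ZMod.val_lt x
    have hq2 : ℓ^s = ℓ^(s-k) * ℓ^k := by rw [← pow_add]; congr 1; omega
    rw [hm, hq2] at hxlt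
    exact Nat.lt_of_mul_lt_mul_left hxlt
  refine ⟨⟨m, hmlt⟩, ?_⟩
  show ((ℓ^(s-k) * m : ℕ) : ZMod (ℓ^s)) = x
  rw [← hm, ZMod.natCast_zmod_val]

lemma card_dvd (ℓ s k : ℕ) (hℓ : ℓ.Prime) (hk : k ≤ s) [NeZero (ℓ^s)] :
    Nat.card {x : ZMod (ℓ^s) | (ℓ:ZMod (ℓ^s))^k ∣ x} ≤ ℓ^(s-k) := by
  apply card_le_of_subset_range (fun m : Fin (ℓ^(s-k)) => ((ℓ^k * (m:ℕ) : ℕ) : ZMod (ℓ^s)))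
  rintro x ⟨c, hc⟩
  have hpos : 0 < ℓ^(s-k) := pow_pos hℓ.pos _
  refine ⟨⟨c.val % ℓ^(s-k), Nat.mod_lt _ hpos⟩, ?_⟩
  show ((ℓ^k * (c.val % ℓ^(s-k)) : ℕ) : ZMod (ℓ^s)) = x
  have key : (ℓ^k * c.val : ℕ) = ℓ^s * (c.val / ℓ^(s-k)) + ℓ^k * (c.val % ℓ^(s-k)) := by
    conv_lhs => rw [← Nat.div_add_mod c.val (ℓ^(s-k))]
    rw [Nat.mul_add, ← Nat.mul_assoc, ← pow_add, Nat.add_sub_cancel' hk]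
  have := congrArg (fun n : ℕ => (n : ZMod (ℓ^s))) key
  simp only [Nat.cast_add, Nat.cast_mul, Nat.cast_pow] at this
  have hz : ((ℓ:ZMod (ℓ^s)))^s = 0 := by rw [← Nat.cast_pow, ZMod.natCast_self]
  rw [hz, zero_mul, zero_add] at this
  push_cast
  rw [← this, ZMod.natCast_zmod_val, hc]

lemma nonunit_dvd (ℓ s : ℕ) (hℓ : ℓ.Prime) (hs : 0 < s) [NeZero (ℓ^s)] (u : ZMod (ℓ^s))
    (h : ¬ IsUnit u) : (ℓ:ZMod (ℓ^s)) ∣ u := by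
  have hnc : ¬ (u.val).Coprime (ℓ^s) := by
    intro hc
    apply h
    have := (ZMod.isUnit_iff_coprime u.val (ℓ^s)).mpr hc
    rwa [ZMod.natCast_zmod_val] at this
  rw [Nat.coprime_pow_right_iff hs] at hnc
  have hdvd : ℓ ∣ u.val := by
    by_contra hnd
    exact hnc ((hℓ.coprime_iff_not_dvd.mpr hnd)).symm
  obtain ⟨m, hm⟩ := hdvd
  exact ⟨(m : ZMod (ℓ^s)), by rw [← ZMod.natCast_zmod_val u, hm]; push_cast; ring⟩

lemma crossBound (ℓ : ℕ) (hℓ : ℓ.Prime) (s : ℕ) (hs : 0 < s) [NeZero (ℓ^s)]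
    (S : Set (Fin 3 → ZMod (ℓ^s)))
    (hcomm : ∀ w ∈ S, ∀ w' ∈ S, ∀ i j, w i * w' j = w j * w' i) :
    Nat.card S ≤ ℓ^(2*s) := by
  classical
  set P : ℕ → Prop := fun k => ∀ w ∈ S, ∀ i, ((ℓ:ZMod (ℓ^s)))^k ∣ w i with hPdef
  have hP0 : P 0 := by intro w _ i; simp
  set k := Nat.findGreatest P s with hkdef
  have hks : k ≤ s := Nat.findGreatest_le s
  have hPk : P k := Nat.findGreatest_spec (Nat.zero_le s) hP0
  have hz : ((ℓ:ZMod (ℓ^s)))^s = 0 := by rw [← Nat.cast_pow, ZMod.natCast_self]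
  by_cases hkeq : k = s
  · have hsub : S ⊆ {fun _ => 0} := by
      intro w hw
      have hwz : ∀ i, w i = 0 := by
        intro i
        obtain ⟨c, hc⟩ := hPk w hw i
        rw [hkeq] at hc
        rw [hc, hz, zero_mul]
      simp only [Set.mem_singleton_iff]
      funext i; exact hwz i
    calc Nat.card S ≤ Nat.card ({fun _ => 0} : Set (Fin 3 → ZMod (ℓ^s))) :=
          Nat.card_mono (Set.finite_singleton _) hsub
      _ = 1 := by simp
      _ ≤ ℓ^(2*s) := Nat.one_le_pow _ _ hℓ.pos
  · have hklt : k < s := lt_of_le_of_ne hks hkeq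
    have hnP : ¬ P (k+1) :=
      Nat.findGreatest_is_greatest (P := P) (n := s) (Nat.lt_succ_self k) (by omega)
    simp only [hPdef, not_forall] at hnP
    obtain ⟨w0, hw0S, i0, hndvd⟩ := hnP
    obtain ⟨u, hu⟩ := hPk w0 hw0S i0
    have hUnit : IsUnit u := by
      by_contra hnu
      obtain ⟨m, hm⟩ := nonunit_dvd ℓ s hℓ hs u hnu
      exact hndvd ⟨m, by rw [hu, hm, pow_succ]; ring⟩
    choose c hc using fun j => hPk w0 hw0S j
    set T : Set (ZMod (ℓ^s)) := {x | (ℓ:ZMod (ℓ^s))^k * x = 0} with hT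
    by_cases h3k : 3*k ≤ s
    · have hmem : ∀ (w : S) (j : Fin 3), (w : Fin 3 → ZMod (ℓ^s)) i0 * c j - (w : Fin 3 → ZMod (ℓ^s)) j * u ∈ T := by
        intro w j
        show (ℓ:ZMod (ℓ^s))^k * _ = 0
        have hcw := hcomm w.1 w.2 w0 hw0S i0 j
        calc (ℓ:ZMod (ℓ^s))^k * (w.1 i0 * c j - w.1 j * u)
            = w.1 i0 * ((ℓ:ZMod (ℓ^s))^k * c j) - w.1 j * ((ℓ:ZMod (ℓ^s))^k * u) := by ring
          _ = w.1 i0 * w0 j - w.1 j * w0 i0 := by rw [← hc j, ← hu]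
          _ = 0 := by rw [hcw]; ring
      set Φ : S → ZMod (ℓ^s) × (Fin 3 → T) :=
        fun w => (w.1 i0, fun j => ⟨w.1 i0 * c j - w.1 j * u, hmem w j⟩) with hΦdef
      have hΦ : Function.Injective Φ := by
        intro w w' h
        obtain ⟨h1, h2⟩ := Prod.mk.injEq .. ▸ h
        apply Subtype.ext
        funext j
        have h3 : w.1 i0 * c j - w.1 j * u = w'.1 i0 * c j - w'.1 j * u :=
          congrArg Subtype.val (congrFun h2 j)
        rw [h1] at h3
        have h5 : w.1 j * u = w'.1 j * u := sub_right_inj.mp h3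
        exact hUnit.mul_left_cancel
          (by rw [mul_comm u (w.1 j), mul_comm u (w'.1 j)]; exact h5)
      calc Nat.card S ≤ Nat.card (ZMod (ℓ^s) × (Fin 3 → T)) :=
            Nat.card_le_card_of_injective Φ hΦ
        _ = ℓ^s * (Nat.card T)^3 := by
            rw [Nat.card_prod, Nat.card_zmod, Nat.card_pi]
            simp [Finset.prod_const]
        _ ≤ ℓ^s * (ℓ^k)^3 :=
            Nat.mul_le_mul_left _ (Nat.pow_le_pow_left (card_ann ℓ s k hℓ hks) 3)
        _ ≤ ℓ^(2*s) := by
            rw [← pow_mul, ← pow_add]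
            exact Nat.pow_le_pow_right hℓ.pos (by omega)
    · set D : Set (ZMod (ℓ^s)) := {x | (ℓ:ZMod (ℓ^s))^k ∣ x} with hD
      set Φ : S → (Fin 3 → D) := fun w => fun i => ⟨w.1 i, hPk w.1 w.2 i⟩ with hΦdef
      have hΦ : Function.Injective Φ := by
        intro w w' h
        apply Subtype.ext
        funext i
        exact congrArg Subtype.val (congrFun h i)
      calc Nat.card S ≤ Nat.card (Fin 3 → D) := Nat.card_le_card_of_injective Φ hΦ
        _ = (Nat.card D)^3 := by rw [Nat.card_pi]; simp [Finset.prod_const]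
        _ ≤ (ℓ^(s-k))^3 := Nat.pow_le_pow_left (card_dvd ℓ s k hℓ hks) 3
        _ ≤ ℓ^(2*s) := by
            rw [← pow_mul]
            exact Nat.pow_le_pow_right hℓ.pos (by omega)


/-- For any prime `ℓ` and positive integer `s`, every abelian subgroup `H` of
`GL₂(ℤ/ℓ^s ℤ)` has order at most `ℓ^(3s)`. -/
theorem abelian_subgroup_GL2_card_le (ℓ : ℕ) (hℓ : ℓ.Prime) (s : ℕ) (hs : 0 < s)
    (H : Subgroup (Matrix.GeneralLinearGroup (Fin 2) (ZMod (ℓ ^ s))))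
    (hH : ∀ a ∈ H, ∀ b ∈ H, a * b = b * a) :
    Nat.card H ≤ ℓ ^ (3 * s) := by
  haveI : NeZero (ℓ^s) := ⟨pow_ne_zero s hℓ.pos.ne'⟩
  let wmap : Matrix.GeneralLinearGroup (Fin 2) (ZMod (ℓ ^ s)) → (Fin 3 → ZMod (ℓ^s)) :=
    fun g => ![(g : Matrix (Fin 2) (Fin 2) (ZMod (ℓ^s))) 0 1,
               (g : Matrix (Fin 2) (Fin 2) (ZMod (ℓ^s))) 1 0,
               (g : Matrix (Fin 2) (Fin 2) (ZMod (ℓ^s))) 0 0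
                 - (g : Matrix (Fin 2) (Fin 2) (ZMod (ℓ^s))) 1 1]
  set S : Set (Fin 3 → ZMod (ℓ^s)) := wmap '' (H : Set _) with hS
  have hcross : ∀ w ∈ S, ∀ w' ∈ S, ∀ i j, w i * w' j = w j * w' i := by
    rintro _ ⟨a, ha, rfl⟩ _ ⟨b, hb, rfl⟩ i j
    have hab := hH a ha b hb
    have h1 : (a : Matrix (Fin 2) (Fin 2) (ZMod (ℓ^s))) * (b : Matrix (Fin 2) (Fin 2) (ZMod (ℓ^s)))
        = (b : Matrix (Fin 2) (Fin 2) (ZMod (ℓ^s))) * (a : Matrix (Fin 2) (Fin 2) (ZMod (ℓ^s))) := by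
      have := congrArg Units.val hab
      simpa using this
    have e00 := congrFun (congrFun h1 0) 0
    have e01 := congrFun (congrFun h1 0) 1
    have e10 := congrFun (congrFun h1 1) 0
    simp only [Matrix.mul_apply, Fin.sum_univ_two] at e00 e01 e10
    fin_cases i <;> fin_cases j <;> simp [wmap]
    · linear_combination e00
    · linear_combination -e01
    · linear_combination -e00
    · linear_combination e10
    · linear_combination e01
    · linear_combination -e10
  have hmemS : ∀ h : H, wmap h.1 ∈ S := fun h => ⟨h.1, h.2, rfl⟩
  set Ψ : H → ZMod (ℓ^s) × S :=
    fun h => ((h.1 : Matrix (Fin 2) (Fin 2) (ZMod (ℓ^s))) 0 0, ⟨wmap h.1, hmemS h⟩) with hΨdef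
  have hΨ : Function.Injective Ψ := by
    intro g g' h
    obtain ⟨h1, h2⟩ := Prod.mk.injEq .. ▸ h
    have h2' : wmap g.1 = wmap g'.1 := congrArg Subtype.val h2
    have e01 := congrFun h2' 0
    have e10 := congrFun h2' 1
    have e2 := congrFun h2' 2
    simp only [wmap, Matrix.cons_val_zero, Matrix.cons_val_one, Matrix.head_cons,
      Matrix.cons_val_two, Matrix.tail_cons, Fin.isValue] at e01 e10 e2
    apply Subtype.ext
    apply Units.ext
    ext i j
    fin_cases i <;> fin_cases j
    · exact h1
    · exact e01
    · exact e10
    · show (g.1 : Matrix (Fin 2) (Fin 2) (ZMod (ℓ^s))) 1 1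
        = (g'.1 : Matrix (Fin 2) (Fin 2) (ZMod (ℓ^s))) 1 1
      linear_combination h1 - e2
  calc Nat.card H ≤ Nat.card (ZMod (ℓ^s) × S) := Nat.card_le_card_of_injective Ψ hΨ
    _ = ℓ^s * Nat.card S := by rw [Nat.card_prod, Nat.card_zmod]
    _ ≤ ℓ^s * ℓ^(2*s) := Nat.mul_le_mul_left _ (crossBound ℓ hℓ s hs S hcross)
    _ = ℓ^(3*s) := by rw [← pow_add]; congr 1; omega
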